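/- Let H be a real Hilbert space and γ: ℝ → H a continuous map such that ‖γ(t)‖ = 1 for all t, |⟨γ(s),γ(t)⟩| < 1 whenever s ≠ t, and the set γ(ℝ) is projection-invariant. Then there exists a continuous injective function ψ: ℝ → ℝ whose image is an open interval (possibly bounded, half-infinite, or all of ℝ) such that |⟨γ(s),γ(t)⟩| = 1/cosh(ψ(t)−ψ(s)) for all s,t ∈ ℝ. -/

import Mathlib

open RealInnerProductSpace

/-- The spherical projection of `y` to the hyperplane orthogonal to the unit vector `s₀`:
`p_{s₀}(y) = (y − ⟨s₀,y⟩ s₀)/√(1 − ⟨s₀,y⟩²)`. -/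
noncomputable def sphProj {H : Type*} [NormedAddCommGroup H] [InnerProductSpace ℝ H]
    (s₀ y : H) : H :=
  (Real.sqrt (1 - ⟪s₀, y⟫ ^ 2))⁻¹ • (y - ⟪s₀, y⟫ • s₀)

/-- A set `S` of unit vectors in a real inner product space is *projection-invariant*
if for every `s₀ ∈ S` and all `x, y ∈ S` with `|⟨x,s₀⟩| < 1` and `|⟨y,s₀⟩| < 1` one has
`|⟨p_{s₀}(x), p_{s₀}(y)⟩| = |⟨x,y⟩|`. -/
def ProjInvariant {H : Type*} [NormedAddCommGroup H] [InnerProductSpace ℝ H]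
    (S : Set H) : Prop :=
  ∀ s₀ ∈ S, ∀ x ∈ S, ∀ y ∈ S, |⟪x, s₀⟫| < 1 → |⟪y, s₀⟫| < 1 →
    |⟪sphProj s₀ x, sphProj s₀ y⟫| = |⟪x, y⟫|

namespace Stmt14Aux

noncomputable def Df (x : ℝ) : ℝ := Real.arsinh (Real.sqrt (1 - x ^ 2) / x)

lemma cosh_inj_nn {x y : ℝ} (hx : 0 ≤ x) (hy : 0 ≤ y) (h : Real.cosh x = Real.cosh y) :
    x = y := by
  have h2 : Real.sinh x ^ 2 = Real.sinh y ^ 2 := by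
    have h1 := Real.cosh_sq x
    have h3 := Real.cosh_sq y
    have h4 : Real.cosh x ^ 2 = Real.cosh y ^ 2 := by rw [h]
    linarith
  have hsx : 0 ≤ Real.sinh x := Real.sinh_nonneg_iff.2 hx
  have hsy : 0 ≤ Real.sinh y := Real.sinh_nonneg_iff.2 hy
  have : Real.sinh x = Real.sinh y := by nlinarith
  exact Real.sinh_injective this

lemma Df_nonneg {f : ℝ} (hf : 0 < f) : 0 ≤ Df f := by
  rw [Df, Real.arsinh_nonneg_iff]
  positivity

lemma cosh_Df {f : ℝ} (hf : 0 < f) (hf1 : f ≤ 1) : Real.cosh (Df f) = 1 / f := by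
  rw [Df, Real.cosh_arsinh]
  have h1 : (0:ℝ) ≤ 1 - f ^ 2 := by nlinarith
  have h2 : 1 + (Real.sqrt (1 - f ^ 2) / f) ^ 2 = 1 / f ^ 2 := by
    rw [div_pow, Real.sq_sqrt h1]
    field_simp
    ring
  rw [h2, one_div, one_div, Real.sqrt_inv, Real.sqrt_sq hf.le]

lemma sinh_Df {f : ℝ} : Real.sinh (Df f) = Real.sqrt (1 - f ^ 2) / f := by
  rw [Df, Real.sinh_arsinh]

lemma Df_pos {f : ℝ} (hf : 0 < f) (hf1 : f < 1) : 0 < Df f := by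
  rw [Df, Real.arsinh_pos_iff]
  have : (0:ℝ) < 1 - f ^ 2 := by nlinarith
  positivity

lemma Df_one : Df 1 = 0 := by
  rw [Df]
  norm_num

lemma tri_core {a b c : ℝ} (ha0 : a ≠ 0) (hb0 : b ≠ 0) (hc0 : c ≠ 0)
    (ha : |a| < 1) (hb : |b| < 1) (hc : |c| ≤ 1)
    (heq : (c - a * b) ^ 2 = c ^ 2 * ((1 - a ^ 2) * (1 - b ^ 2))) :
    Df (|c|) = Df (|a|) + Df (|b|) ∨ Df (|c|) = |Df (|a|) - Df (|b|)| := by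
  obtain ⟨Ta, hTa⟩ : ∃ t, t = Real.sqrt (1 - a ^ 2) := ⟨_, rfl⟩
  obtain ⟨Tb, hTb⟩ : ∃ t, t = Real.sqrt (1 - b ^ 2) := ⟨_, rfl⟩
  have ha1 : a ^ 2 < 1 := by have := abs_lt.mp ha; nlinarith
  have hb1 : b ^ 2 < 1 := by have := abs_lt.mp hb; nlinarith
  have hTa2 : Ta ^ 2 = 1 - a ^ 2 := by rw [hTa]; exact Real.sq_sqrt (by linarith)
  have hTb2 : Tb ^ 2 = 1 - b ^ 2 := by rw [hTb]; exact Real.sq_sqrt (by linarith)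
  have hTapos : 0 < Ta := by rw [hTa]; exact Real.sqrt_pos.2 (by linarith)
  have hTbpos : 0 < Tb := by rw [hTb]; exact Real.sqrt_pos.2 (by linarith)
  have hTa1 : Ta < 1 := by
    nlinarith [hTa2, sq_abs a, abs_pos.mpr ha0, sq_nonneg (|a|)]
  have hTb1 : Tb ≤ 1 := by nlinarith
  have hka : 0 < |a| := abs_pos.mpr ha0
  have hkb : 0 < |b| := abs_pos.mpr hb0
  have hkc : 0 < |c| := abs_pos.mpr hc0
  have hu : Real.cosh (Df (|a|)) = 1 / |a| := cosh_Df hka ha.le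
  have hv : Real.cosh (Df (|b|)) = 1 / |b| := cosh_Df hkb hb.le
  have hw : Real.cosh (Df (|c|)) = 1 / |c| := cosh_Df hkc hc
  have hsu : Real.sinh (Df (|a|)) = Ta / |a| := by rw [sinh_Df, sq_abs, ← hTa]
  have hsv : Real.sinh (Df (|b|)) = Tb / |b| := by rw [sinh_Df, sq_abs, ← hTb]
  have hfac : (c - a * b - c * (Ta * Tb)) * (c - a * b + c * (Ta * Tb)) = 0 := by
    have e : (c * (Ta * Tb)) ^ 2 = c ^ 2 * ((1 - a ^ 2) * (1 - b ^ 2)) := by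
      rw [mul_pow, mul_pow, hTa2, hTb2]
    have key : (c - a * b) ^ 2 - (c * (Ta * Tb)) ^ 2 = 0 := by rw [heq, e]; ring
    linear_combination key
  rcases mul_eq_zero.mp hfac with h | h
  · right
    have hab : a * b = c * (1 - Ta * Tb) := by linarith
    have h1 : |a| * |b| = |c| * (1 - Ta * Tb) := by
      rw [← abs_mul, hab, abs_mul]
      congr 1
      exact abs_of_nonneg (by nlinarith)
    have hcsum : Real.cosh (Df (|a|) - Df (|b|)) = 1 / |c| := by
      rw [Real.cosh_sub, hu, hv, hsu, hsv, div_mul_div_comm, div_mul_div_comm,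
        div_sub_div_same, one_mul]
      rw [div_eq_div_iff (by positivity) hkc.ne']
      linear_combination -h1
    have : Real.cosh (Df (|c|)) = Real.cosh |Df (|a|) - Df (|b|)| := by
      rw [Real.cosh_abs, hcsum, hw]
    exact cosh_inj_nn (Df_nonneg hkc) (abs_nonneg _) this
  · left
    have hab : a * b = c * (1 + Ta * Tb) := by linarith
    have h1 : |a| * |b| = |c| * (1 + Ta * Tb) := by
      rw [← abs_mul, hab, abs_mul]
      congr 1
      exact abs_of_nonneg (by nlinarith)
    have hcsum : Real.cosh (Df (|a|) + Df (|b|)) = 1 / |c| := by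
      rw [Real.cosh_add, hu, hv, hsu, hsv, div_mul_div_comm, div_mul_div_comm,
        ← add_div, one_mul]
      rw [div_eq_div_iff (by positivity) hkc.ne']
      linear_combination -h1
    have : Real.cosh (Df (|c|)) = Real.cosh (Df (|a|) + Df (|b|)) := by rw [hcsum, hw]
    exact cosh_inj_nn (Df_nonneg hkc) (add_nonneg (Df_nonneg hka) (Df_nonneg hkb)) this

lemma combo_lt {α β a b a' b' : ℝ} (hα : 0 ≤ α) (hβ : 0 ≤ β) (hs : α + β = 1)
    (h1 : a < a') (h2 : b < b') : α * a + β * b < α * a' + β * b' := by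
  rcases eq_or_lt_of_le hα with h | h
  · have hβ1 : β = 1 := by linarith
    rw [← h, hβ1]
    simpa using h2
  · exact add_lt_add_of_lt_of_le (mul_lt_mul_of_pos_left h1 h)
      (mul_le_mul_of_nonneg_left h2.le hβ)

section Curve

variable {H : Type*} [NormedAddCommGroup H] [InnerProductSpace ℝ H] (γ : ℝ → H)

lemma inner_self_one (hunit : ∀ t : ℝ, ‖γ t‖ = 1) (t : ℝ) : ⟪γ t, γ t⟫ = 1 := by
  rw [real_inner_self_eq_norm_sq, hunit, one_pow]

lemma projIdent (hunit : ∀ t : ℝ, ‖γ t‖ = 1)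
    (hlt : ∀ s t : ℝ, s ≠ t → |⟪γ s, γ t⟫| < 1)
    (hproj : ProjInvariant (Set.range γ)) (r s t : ℝ) (hrs : r ≠ s) (hrt : r ≠ t) :
    (⟪γ s, γ t⟫ - ⟪γ r, γ s⟫ * ⟪γ r, γ t⟫) ^ 2
      = ⟪γ s, γ t⟫ ^ 2 * ((1 - ⟪γ r, γ s⟫ ^ 2) * (1 - ⟪γ r, γ t⟫ ^ 2)) := by
  have h1 : |⟪γ s, γ r⟫| < 1 := hlt s r hrs.symm
  have h2 : |⟪γ t, γ r⟫| < 1 := hlt t r hrt.symm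
  have key := hproj (γ r) ⟨r, rfl⟩ (γ s) ⟨s, rfl⟩ (γ t) ⟨t, rfl⟩ h1 h2
  have ha1 : ⟪γ r, γ s⟫ ^ 2 < 1 := by
    rw [real_inner_comm] at h1; nlinarith [abs_lt.mp h1]
  have hb1 : ⟪γ r, γ t⟫ ^ 2 < 1 := by
    rw [real_inner_comm] at h2; nlinarith [abs_lt.mp h2]
  have hTa : (0:ℝ) < Real.sqrt (1 - ⟪γ r, γ s⟫ ^ 2) := Real.sqrt_pos.2 (by linarith)
  have hTb : (0:ℝ) < Real.sqrt (1 - ⟪γ r, γ t⟫ ^ 2) := Real.sqrt_pos.2 (by linarith)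
  have hinner : ⟪γ s - ⟪γ r, γ s⟫ • γ r, γ t - ⟪γ r, γ t⟫ • γ r⟫
      = ⟪γ s, γ t⟫ - ⟪γ r, γ s⟫ * ⟪γ r, γ t⟫ := by
    rw [inner_sub_left, inner_sub_right, inner_sub_right, real_inner_smul_left,
      real_inner_smul_left, real_inner_smul_right, real_inner_smul_right,
      inner_self_one γ hunit r, real_inner_comm (γ s) (γ r)]
    ring
  have hexp : ⟪sphProj (γ r) (γ s), sphProj (γ r) (γ t)⟫
      = (Real.sqrt (1 - ⟪γ r, γ s⟫ ^ 2))⁻¹ * ((Real.sqrt (1 - ⟪γ r, γ t⟫ ^ 2))⁻¹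
        * (⟪γ s, γ t⟫ - ⟪γ r, γ s⟫ * ⟪γ r, γ t⟫)) := by
    rw [sphProj, sphProj, real_inner_smul_left, real_inner_smul_right, hinner]
  rw [hexp, abs_mul, abs_mul, abs_inv, abs_inv, abs_of_nonneg (Real.sqrt_nonneg _),
    abs_of_nonneg (Real.sqrt_nonneg _)] at key
  have key2 : |⟪γ s, γ t⟫ - ⟪γ r, γ s⟫ * ⟪γ r, γ t⟫|
      = |⟪γ s, γ t⟫| * (Real.sqrt (1 - ⟪γ r, γ s⟫ ^ 2) * Real.sqrt (1 - ⟪γ r, γ t⟫ ^ 2)) := by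
    rw [← key]; field_simp
  have key3 := congrArg (· ^ 2) key2
  simp only [mul_pow, sq_abs] at key3
  rw [Real.sq_sqrt (by linarith : (0:ℝ) ≤ 1 - ⟪γ r, γ s⟫ ^ 2),
    Real.sq_sqrt (by linarith : (0:ℝ) ≤ 1 - ⟪γ r, γ t⟫ ^ 2)] at key3
  rw [key3]

lemma inner_ne_lt (hcont : Continuous γ) (hunit : ∀ t : ℝ, ‖γ t‖ = 1)
    (hlt : ∀ s t : ℝ, s ≠ t → |⟪γ s, γ t⟫| < 1)
    (hproj : ProjInvariant (Set.range γ)) {s t : ℝ} (hst : s < t) :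
    ⟪γ s, γ t⟫ ≠ 0 := by
  intro hc
  have hcont2 : Continuous fun r : ℝ => ⟪γ s, γ r⟫ :=
    Continuous.inner continuous_const hcont
  set K : Set ℝ := Set.Icc s t ∩ {r | ⟪γ s, γ r⟫ = 0} with hK
  have hKclosed : IsClosed K :=
    isClosed_Icc.inter (isClosed_eq hcont2 continuous_const)
  have hKne : K.Nonempty := ⟨t, ⟨hst.le, le_refl t⟩, hc⟩
  have hKbdd : BddBelow K := ⟨s, fun r hr => hr.1.1⟩
  set w : ℝ := sInf K with hw
  have hwK : w ∈ K := hKclosed.csInf_mem hKne hKbdd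
  have hsw : s < w := by
    rcases lt_or_eq_of_le hwK.1.1 with h | h
    · exact h
    · exfalso
      have h2 : ⟪γ s, γ w⟫ = 0 := hwK.2
      rw [← h, inner_self_one γ hunit s] at h2
      norm_num at h2
  have hzero : ∀ r ∈ Set.Ioo s w, ⟪γ r, γ w⟫ = 0 := by
    intro r hr
    have hrs : r ≠ s := ne_of_gt hr.1
    have hrw : r ≠ w := ne_of_lt hr.2
    have hid := projIdent γ hunit hlt hproj r s w hrs hrw
    rw [hwK.2] at hid
    have hab : ⟪γ r, γ s⟫ * ⟪γ r, γ w⟫ = 0 := by nlinarith [hid]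
    rcases mul_eq_zero.mp hab with h | h
    · exfalso
      have hrK : r ∈ K := by
        refine ⟨⟨hr.1.le, le_trans hr.2.le hwK.1.2⟩, ?_⟩
        rw [real_inner_comm] at h
        exact h
      have := csInf_le hKbdd hrK
      rw [← hw] at this
      exact absurd this (not_le.mpr hr.2)
    · exact h
  have hEq : Set.EqOn (fun r : ℝ => ⟪γ r, γ w⟫) (fun _ => (0:ℝ)) (Set.Ioo s w) := by
    intro r hr
    exact hzero r hr
  have hcont3 : Continuous fun r : ℝ => ⟪γ r, γ w⟫ :=
    Continuous.inner hcont continuous_const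
  have hcl := hEq.closure hcont3 continuous_const
  have hwmem : w ∈ closure (Set.Ioo s w) := by
    rw [closure_Ioo hsw.ne]
    exact Set.right_mem_Icc.mpr hsw.le
  have := hcl hwmem
  simp only at this
  rw [inner_self_one γ hunit w] at this
  norm_num at this

lemma inner_ne (hcont : Continuous γ) (hunit : ∀ t : ℝ, ‖γ t‖ = 1)
    (hlt : ∀ s t : ℝ, s ≠ t → |⟪γ s, γ t⟫| < 1)
    (hproj : ProjInvariant (Set.range γ)) (s t : ℝ) : ⟪γ s, γ t⟫ ≠ 0 := by
  rcases lt_trichotomy s t with h | h | h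
  · exact inner_ne_lt γ hcont hunit hlt hproj h
  · rw [h, inner_self_one γ hunit t]; norm_num
  · rw [real_inner_comm]
    exact inner_ne_lt γ hcont hunit hlt hproj h

end Curve

noncomputable def dd {H : Type*} [NormedAddCommGroup H] [InnerProductSpace ℝ H]
    (γ : ℝ → H) (s t : ℝ) : ℝ := Df (|⟪γ s, γ t⟫|)

section Curve2

variable {H : Type*} [NormedAddCommGroup H] [InnerProductSpace ℝ H] (γ : ℝ → H)

lemma dd_symm (s t : ℝ) : dd γ s t = dd γ t s := by
  rw [dd, dd, real_inner_comm]

lemma dd_self (hunit : ∀ t : ℝ, ‖γ t‖ = 1) (t : ℝ) : dd γ t t = 0 := by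
  rw [dd, inner_self_one γ hunit t]
  norm_num [Df_one]

lemma abs_inner_le_one (hunit : ∀ t : ℝ, ‖γ t‖ = 1) (s t : ℝ) : |⟪γ s, γ t⟫| ≤ 1 := by
  have := abs_real_inner_le_norm (γ s) (γ t)
  rwa [hunit, hunit, one_mul] at this

lemma dd_nonneg (hcont : Continuous γ) (hunit : ∀ t : ℝ, ‖γ t‖ = 1)
    (hlt : ∀ s t : ℝ, s ≠ t → |⟪γ s, γ t⟫| < 1)
    (hproj : ProjInvariant (Set.range γ)) (s t : ℝ) : 0 ≤ dd γ s t :=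
  Df_nonneg (abs_pos.mpr (inner_ne γ hcont hunit hlt hproj s t))

lemma dd_pos (hcont : Continuous γ) (hunit : ∀ t : ℝ, ‖γ t‖ = 1)
    (hlt : ∀ s t : ℝ, s ≠ t → |⟪γ s, γ t⟫| < 1)
    (hproj : ProjInvariant (Set.range γ)) {s t : ℝ} (hst : s ≠ t) : 0 < dd γ s t :=
  Df_pos (abs_pos.mpr (inner_ne γ hcont hunit hlt hproj s t)) (hlt s t hst)

lemma cosh_dd (hcont : Continuous γ) (hunit : ∀ t : ℝ, ‖γ t‖ = 1)
    (hlt : ∀ s t : ℝ, s ≠ t → |⟪γ s, γ t⟫| < 1)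
    (hproj : ProjInvariant (Set.range γ)) (s t : ℝ) :
    Real.cosh (dd γ s t) = 1 / |⟪γ s, γ t⟫| :=
  cosh_Df (abs_pos.mpr (inner_ne γ hcont hunit hlt hproj s t))
    (abs_inner_le_one γ hunit s t)

lemma dd_cont (hcont : Continuous γ) (hcont2 : Continuous γ)
    (hne : ∀ s t : ℝ, ⟪γ s, γ t⟫ ≠ 0) :
    Continuous fun p : ℝ × ℝ => dd γ p.1 p.2 := by
  have hinner : Continuous fun p : ℝ × ℝ => ⟪γ p.1, γ p.2⟫ :=
    Continuous.inner (hcont.comp continuous_fst) (hcont.comp continuous_snd)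
  have habs : Continuous fun p : ℝ × ℝ => |⟪γ p.1, γ p.2⟫| := hinner.abs
  unfold dd Df
  apply Real.continuous_arsinh.comp
  apply Continuous.div
  · exact (Real.continuous_sqrt.comp (continuous_const.sub (habs.pow 2)))
  · exact habs
  · intro p
    exact (abs_pos.mpr (hne p.1 p.2)).ne'

lemma dd_tri (hcont : Continuous γ) (hunit : ∀ t : ℝ, ‖γ t‖ = 1)
    (hlt : ∀ s t : ℝ, s ≠ t → |⟪γ s, γ t⟫| < 1)
    (hproj : ProjInvariant (Set.range γ)) (r s t : ℝ) (hrs : r ≠ s) (hrt : r ≠ t)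
    (hst : s ≠ t) :
    dd γ s t = dd γ r s + dd γ r t ∨ dd γ s t = |dd γ r s - dd γ r t| := by
  have heq := projIdent γ hunit hlt hproj r s t hrs hrt
  exact tri_core (inner_ne γ hcont hunit hlt hproj r s)
    (inner_ne γ hcont hunit hlt hproj r t) (inner_ne γ hcont hunit hlt hproj s t)
    (hlt r s hrs) (hlt r t hrt) (abs_inner_le_one γ hunit s t) heq

lemma dd_between (hcont : Continuous γ) (hunit : ∀ t : ℝ, ‖γ t‖ = 1)
    (hlt : ∀ s t : ℝ, s ≠ t → |⟪γ s, γ t⟫| < 1)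
    (hproj : ProjInvariant (Set.range γ)) (x y z : ℝ) (hxy : x ≠ y) (hxz : x ≠ z)
    (hyz : y ≠ z) :
    dd γ x z = dd γ x y + dd γ y z ∨ dd γ x y = dd γ x z + dd γ y z ∨
      dd γ y z = dd γ x y + dd γ x z := by
  rcases dd_tri γ hcont hunit hlt hproj y x z hxy.symm hyz hxz with h | h
  · left
    rw [h, dd_symm γ y x]
  · rcases (abs_eq (dd_nonneg γ hcont hunit hlt hproj x z)).mp h.symm with h2 | h2
    · right; left
      rw [dd_symm γ y x] at h2
      linarith
    · right; right
      rw [dd_symm γ y x] at h2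
      linarith

set_option maxHeartbeats 2000000 in
lemma dd_add (hcont : Continuous γ) (hunit : ∀ t : ℝ, ‖γ t‖ = 1)
    (hlt : ∀ s t : ℝ, s ≠ t → |⟪γ s, γ t⟫| < 1)
    (hproj : ProjInvariant (Set.range γ)) :
    ∀ x y z : ℝ, x < y → y < z → dd γ x z = dd γ x y + dd γ y z := by
  have hne : ∀ s t : ℝ, ⟪γ s, γ t⟫ ≠ 0 := inner_ne γ hcont hunit hlt hproj
  have hddc : Continuous fun p : ℝ × ℝ => dd γ p.1 p.2 := dd_cont γ hcont hcont hne
  set T : Set (ℝ × ℝ × ℝ) := {p | p.1 < p.2.1 ∧ p.2.1 < p.2.2} with hT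
  -- coordinate continuity
  have c1 : Continuous fun p : ℝ × ℝ × ℝ => p.1 := continuous_fst
  have c2 : Continuous fun p : ℝ × ℝ × ℝ => p.2.1 := continuous_snd.fst
  have c3 : Continuous fun p : ℝ × ℝ × ℝ => p.2.2 := continuous_snd.snd
  have d12 : Continuous fun p : ℝ × ℝ × ℝ => dd γ p.1 p.2.1 := by fun_prop
  have d13 : Continuous fun p : ℝ × ℝ × ℝ => dd γ p.1 p.2.2 := by fun_prop
  have d23 : Continuous fun p : ℝ × ℝ × ℝ => dd γ p.2.1 p.2.2 := by fun_prop
  set Cy : Set (ℝ × ℝ × ℝ) :=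
    {p | dd γ p.1 p.2.2 = dd γ p.1 p.2.1 + dd γ p.2.1 p.2.2} with hCy
  set Cz : Set (ℝ × ℝ × ℝ) :=
    {p | dd γ p.1 p.2.1 = dd γ p.1 p.2.2 + dd γ p.2.1 p.2.2} with hCz
  set Cx : Set (ℝ × ℝ × ℝ) :=
    {p | dd γ p.2.1 p.2.2 = dd γ p.1 p.2.1 + dd γ p.1 p.2.2} with hCx
  have hCyc : IsClosed Cy := isClosed_eq d13 (d12.add d23)
  have hCzc : IsClosed Cz := isClosed_eq d12 (d13.add d23)
  have hCxc : IsClosed Cx := isClosed_eq d23 (d12.add d13)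
  have hconv : Convex ℝ T := by
    intro p hp q hq α β hα hβ hαβ
    constructor
    · simp only [Prod.fst_add, Prod.snd_add, Prod.smul_fst, Prod.smul_snd, smul_eq_mul]
      exact combo_lt hα hβ hαβ hp.1 hq.1
    · simp only [Prod.fst_add, Prod.snd_add, Prod.smul_fst, Prod.smul_snd, smul_eq_mul]
      exact combo_lt hα hβ hαβ hp.2 hq.2
  have hpre : IsPreconnected T := hconv.isPreconnected
  have hcover : T ⊆ Cy ∪ (Cx ∪ Cz) := by
    rintro ⟨x, y, z⟩ ⟨h1, h2⟩
    rcases dd_between γ hcont hunit hlt hproj x y z (ne_of_lt h1) (ne_of_lt (h1.trans h2))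
      (ne_of_lt h2) with h | h | h
    · exact Or.inl h
    · exact Or.inr (Or.inr h)
    · exact Or.inr (Or.inl h)
  have hdisj1 : ∀ p ∈ T, p ∈ Cy → p ∈ Cx ∪ Cz → False := by
    rintro ⟨x, y, z⟩ ⟨h1, h2⟩ hy hxz
    have pxy : 0 < dd γ x y := dd_pos γ hcont hunit hlt hproj (ne_of_lt h1)
    have pyz : 0 < dd γ y z := dd_pos γ hcont hunit hlt hproj (ne_of_lt h2)
    rcases hxz with hx | hz
    · simp only [hCx, hCy, Set.mem_setOf_eq] at hx hy
      linarith
    · simp only [hCz, hCy, Set.mem_setOf_eq] at hz hy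
      linarith
  have hdisj2 : ∀ p ∈ T, p ∈ Cx → p ∈ Cz → False := by
    rintro ⟨x, y, z⟩ ⟨h1, h2⟩ hx hz
    have pxz : 0 < dd γ x z := dd_pos γ hcont hunit hlt hproj (ne_of_lt (h1.trans h2))
    simp only [hCx, hCz, Set.mem_setOf_eq] at hx hz
    linarith
  -- ruling out T ⊆ Cx
  have hnotCx : ¬ (T ⊆ Cx) := by
    intro hsub
    have hEq : Set.EqOn (fun z : ℝ => dd γ 1 z) (fun z : ℝ => dd γ 0 1 + dd γ 0 z)
        (Set.Ioi 1) := by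
      intro z hz
      have hm : ((0:ℝ), (1:ℝ), z) ∈ T := ⟨by norm_num, hz⟩
      have := hsub hm
      simpa only [hCx, Set.mem_setOf_eq] using this
    have hc1 : Continuous fun z : ℝ => dd γ 1 z := by fun_prop
    have hc2 : Continuous fun z : ℝ => dd γ 0 1 + dd γ 0 z := by fun_prop
    have hcl := hEq.closure hc1 hc2
    have h1m : (1:ℝ) ∈ closure (Set.Ioi (1:ℝ)) := by
      rw [closure_Ioi]; exact Set.self_mem_Ici
    have := hcl h1m
    simp only at this
    rw [dd_self γ hunit 1] at this
    have p01 : 0 < dd γ 0 1 := dd_pos γ hcont hunit hlt hproj (by norm_num)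
    have e01 : dd γ 0 1 = dd γ 1 0 := dd_symm γ 0 1
    linarith [this]
  have hnotCz : ¬ (T ⊆ Cz) := by
    intro hsub
    have hEq : Set.EqOn (fun y : ℝ => dd γ 0 y) (fun y : ℝ => dd γ 0 1 + dd γ y 1)
        (Set.Ioo 0 1) := by
      intro y hy
      have hm : ((0:ℝ), y, (1:ℝ)) ∈ T := ⟨hy.1, hy.2⟩
      have := hsub hm
      simpa only [hCz, Set.mem_setOf_eq] using this
    have hc1 : Continuous fun y : ℝ => dd γ 0 y := by fun_prop
    have hc2 : Continuous fun y : ℝ => dd γ 0 1 + dd γ y 1 := by fun_prop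
    have hcl := hEq.closure hc1 hc2
    have h0m : (0:ℝ) ∈ closure (Set.Ioo (0:ℝ) 1) := by
      rw [closure_Ioo (by norm_num : (0:ℝ) ≠ 1)]
      exact Set.left_mem_Icc.mpr (by norm_num)
    have := hcl h0m
    simp only at this
    rw [dd_self γ hunit 0] at this
    have p01 : 0 < dd γ 0 1 := dd_pos γ hcont hunit hlt hproj (by norm_num)
    have e01 : dd γ 0 1 = dd γ 1 0 := dd_symm γ 0 1
    linarith [this]
  have hTne : T.Nonempty := ⟨(0, 1, 2), by constructor <;> norm_num⟩
  -- main connectedness argument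
  have hTCy : T ⊆ Cy := by
    by_cases hempty : (T ∩ (Cx ∪ Cz)).Nonempty
    · -- show T ∩ Cy = ∅ leads through second split
      by_cases hCyne : (T ∩ Cy).Nonempty
      · exfalso
        obtain ⟨p, hpT, hpCy, hpXZ⟩ :=
          (isPreconnected_closed_iff.mp hpre) Cy (Cx ∪ Cz) hCyc (hCxc.union hCzc)
            hcover hCyne hempty
        exact hdisj1 p hpT hpCy hpXZ
      · -- T ⊆ Cx ∪ Cz
        exfalso
        have hsub : T ⊆ Cx ∪ Cz := by
          intro p hp
          rcases hcover hp with h | h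
          · exact absurd ⟨p, hp, h⟩ hCyne
          · exact h
        by_cases hx : (T ∩ Cx).Nonempty
        · by_cases hz : (T ∩ Cz).Nonempty
          · obtain ⟨p, hpT, hpCx, hpCz⟩ :=
              (isPreconnected_closed_iff.mp hpre) Cx Cz hCxc hCzc hsub hx hz
            exact hdisj2 p hpT hpCx hpCz
          · apply hnotCx
            intro p hp
            rcases hsub hp with h | h
            · exact h
            · exact absurd ⟨p, hp, h⟩ hz
        · apply hnotCz
          intro p hp
          rcases hsub hp with h | h
          · exact absurd ⟨p, hp, h⟩ hx
          · exact h
    · intro p hp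
      rcases hcover hp with h | h
      · exact h
      · exact absurd ⟨p, hp, h⟩ hempty
  intro x y z hxy hyz
  have hm : (x, y, z) ∈ T := ⟨hxy, hyz⟩
  have := hTCy hm
  simpa only [hCy, Set.mem_setOf_eq] using this

end Curve2

noncomputable def psiF {H : Type*} [NormedAddCommGroup H] [InnerProductSpace ℝ H]
    (γ : ℝ → H) (t : ℝ) : ℝ :=
  if t ≤ 0 then -dd γ 0 t else dd γ 0 t

end Stmt14Aux


open Stmt14Aux in
/-- A continuous curve of unit vectors in a real Hilbert space whose image is
projection-invariant (and with `|⟨γ(s),γ(t)⟩| < 1` for `s ≠ t`) is, up to a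
continuous injective reparametrization `ψ` whose image is an open interval,
the helix with `|⟨γ(s),γ(t)⟩| = 1/cosh(ψ(t)−ψ(s))`. -/
theorem stmt14 {H : Type*} [NormedAddCommGroup H] [InnerProductSpace ℝ H]
    [CompleteSpace H]
    (γ : ℝ → H) (hcont : Continuous γ) (hunit : ∀ t : ℝ, ‖γ t‖ = 1)
    (hlt : ∀ s t : ℝ, s ≠ t → |⟪γ s, γ t⟫| < 1)
    (hproj : ProjInvariant (Set.range γ)) :
    ∃ ψ : ℝ → ℝ, Continuous ψ ∧ Function.Injective ψ ∧
      IsOpen (Set.range ψ) ∧ (Set.range ψ).OrdConnected ∧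
      ∀ s t : ℝ, |⟪γ s, γ t⟫| = 1 / Real.cosh (ψ t - ψ s) := by
  classical
  have hne : ∀ s t : ℝ, ⟪γ s, γ t⟫ ≠ 0 := inner_ne γ hcont hunit hlt hproj
  have hadd := dd_add γ hcont hunit hlt hproj
  have hddc : Continuous fun p : ℝ × ℝ => dd γ p.1 p.2 := dd_cont γ hcont hcont hne
  have hc0 : Continuous fun t : ℝ => dd γ 0 t := by fun_prop
  have hψc : Continuous (psiF γ) := by
    unfold psiF
    apply Continuous.if_le hc0.neg hc0 continuous_id continuous_const
    intro x hx
    simp only [id_eq] at hx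
    rw [hx, dd_self γ hunit 0]
    simp [dd_self γ hunit 0]
  have hdiff : ∀ s t : ℝ, s ≤ t → psiF γ t - psiF γ s = dd γ s t := by
    intro s t hst
    rcases eq_or_lt_of_le hst with rfl | hlt'
    · rw [dd_self γ hunit]; ring
    · rcases le_or_gt t 0 with ht | ht
      · have hs : s ≤ 0 := hst.trans ht
        rw [psiF, psiF, if_pos ht, if_pos hs]
        rcases eq_or_lt_of_le ht with rfl | ht'
        · rw [dd_self γ hunit, dd_symm γ s 0]; ring
        · have h1 := hadd s t 0 hlt' ht'
          have e1 : dd γ 0 s = dd γ s 0 := dd_symm γ 0 s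
          have e2 : dd γ 0 t = dd γ t 0 := dd_symm γ 0 t
          linarith
      · rw [psiF, psiF, if_neg (not_le.mpr ht)]
        rcases le_or_gt s 0 with hs | hs
        · rw [if_pos hs]
          rcases eq_or_lt_of_le hs with h | hs'
          · rw [h, dd_self γ hunit 0]
            ring
          · have h1 := hadd s 0 t hs' ht
            have e1 : dd γ 0 s = dd γ s 0 := dd_symm γ 0 s
            linarith
        · rw [if_neg (not_le.mpr hs)]
          have h1 := hadd 0 s t hs hlt'
          linarith
  have hmono : StrictMono (psiF γ) := by
    intro s t hst
    have h1 := hdiff s t hst.le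
    have h2 := dd_pos γ hcont hunit hlt hproj hst.ne
    linarith
  refine ⟨psiF γ, hψc, hmono.injective, ?_, ?_, ?_⟩
  · rw [isOpen_iff_mem_nhds]
    rintro y ⟨x, rfl⟩
    have h1 : psiF γ (x - 1) < psiF γ x := hmono (by linarith)
    have h2 : psiF γ x < psiF γ (x + 1) := hmono (by linarith)
    rw [mem_nhds_iff]
    refine ⟨Set.Ioo (psiF γ (x - 1)) (psiF γ (x + 1)), ?_, isOpen_Ioo, ⟨h1, h2⟩⟩
    intro y hy
    have hsub : Set.Icc (psiF γ (x - 1)) (psiF γ (x + 1)) ⊆ psiF γ '' Set.Icc (x - 1) (x + 1) :=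
      intermediate_value_Icc (by linarith) hψc.continuousOn
    obtain ⟨z, _, hz⟩ := hsub ⟨hy.1.le, hy.2.le⟩
    exact ⟨z, hz⟩
  · have hpre : IsPreconnected (Set.range (psiF γ)) := by
      rw [← Set.image_univ]
      exact isPreconnected_univ.image _ hψc.continuousOn
    exact hpre.ordConnected
  · intro s t
    have hcosh : Real.cosh (psiF γ t - psiF γ s) = Real.cosh (dd γ s t) := by
      rcases le_total s t with h | h
      · rw [hdiff s t h]
      · rw [show psiF γ t - psiF γ s = -(psiF γ s - psiF γ t) by ring, Real.cosh_neg,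
          hdiff t s h, dd_symm γ t s]
    rw [hcosh, cosh_dd γ hcont hunit hlt hproj s t, one_div_one_div]
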